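/- Let Φ be an n×n real matrix with Φ_{ii} = −1 for all i, Φ_{ij} ≥ 0 for i ≠ j, and all column sums equal to zero. Let σ ∈ ℝ^n have strictly positive entries and let r > 0. Then every eigenvalue of the matrix σ▷Φ − r·id has strictly negative real part; in particular det(σ▷Φ − r·id) ≠ 0. -/
import Mathlib


/-- Column-wise scaling of a matrix `Φ` by a vector `σ`. -/
def colScale {n : ℕ} (σ : Fin n → ℝ) (Φ : Matrix (Fin n) (Fin n) ℝ) :
    Matrix (Fin n) (Fin n) ℝ :=
  Matrix.of fun i j => σ j * Φ i j

open Polynomial Matrix in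
lemma charpoly_eval_aux {m : Type*} [Fintype m] [DecidableEq m]
    (B : Matrix m m ℂ) (μ : ℂ) :
    B.charpoly.eval μ = (μ • (1 : Matrix m m ℂ) - B).det := by
  rw [Matrix.charpoly, ← Polynomial.coe_evalRingHom, RingHom.map_det]
  congr 1
  ext i j
  by_cases h : i = j
  · subst h
    simp [Matrix.charmatrix_apply_eq, Matrix.one_apply]
  · simp [Matrix.charmatrix_apply_ne _ _ _ h, Matrix.one_apply_ne h]

open Polynomial Matrix in
lemma hasEigenvalue_of_isRoot {m : Type*} [Fintype m] [DecidableEq m]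
    (B : Matrix m m ℂ) (μ : ℂ) (h : B.charpoly.IsRoot μ) :
    Module.End.HasEigenvalue (Matrix.toLin' Bᵀ) μ := by
  have hdet : (μ • (1 : Matrix m m ℂ) - B).det = 0 := by
    rw [← charpoly_eval_aux]; exact h
  have hdet' : (Bᵀ - μ • (1 : Matrix m m ℂ)).det = 0 := by
    have : (Bᵀ - μ • (1 : Matrix m m ℂ)) = -(μ • (1 : Matrix m m ℂ) - B)ᵀ := by
      ext i j
      by_cases h : i = j <;>
        simp [Matrix.one_apply, h]
    rw [this, Matrix.det_neg, Matrix.det_transpose, hdet, mul_zero]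
  rw [Module.End.hasEigenvalue_iff, Module.End.eigenspace_def]
  have hker : LinearMap.ker (Matrix.toLin' (Bᵀ - μ • (1 : Matrix m m ℂ))) ≠ ⊥ := by
    refine ne_of_gt (LinearMap.bot_lt_ker_of_det_eq_zero ?_)
    rwa [LinearMap.det_toLin']
  have heq : Matrix.toLin' (Bᵀ - μ • (1 : Matrix m m ℂ))
      = Matrix.toLin' Bᵀ - μ • 1 := by
    rw [map_sub, LinearEquiv.map_smul, Matrix.toLin'_one]
    rfl
  rwa [heq] at hker

/-- For a flux matrix `Φ` (diagonal `-1`, nonnegative off-diagonal, zero column sums),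
`σ > 0` and `r > 0`, every eigenvalue of `σ ▷ Φ - r·id` has strictly negative real part;
in particular the determinant is nonzero. -/
theorem colScale_sub_smul_stable {n : ℕ}
    (Φ : Matrix (Fin n) (Fin n) ℝ) (σ : Fin n → ℝ) (r : ℝ)
    (hdiag : ∀ i, Φ i i = -1)
    (hoff : ∀ i j, i ≠ j → 0 ≤ Φ i j)
    (hcol : ∀ j, ∑ i, Φ i j = 0)
    (hσ : ∀ i, 0 < σ i) (hr : 0 < r) :
    (∀ μ : ℂ,
        ((colScale σ Φ - r • (1 : Matrix (Fin n) (Fin n) ℝ)).map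
            (Complex.ofReal)).charpoly.IsRoot μ → μ.re < 0) ∧
      (colScale σ Φ - r • (1 : Matrix (Fin n) (Fin n) ℝ)).det ≠ 0 := by
  set A : Matrix (Fin n) (Fin n) ℝ := colScale σ Φ - r • 1 with hA
  set B : Matrix (Fin n) (Fin n) ℂ := A.map Complex.ofReal with hB
  have main : ∀ μ : ℂ, B.charpoly.IsRoot μ → μ.re < 0 := by
    intro μ hμ
    obtain ⟨k, hk⟩ := eigenvalue_mem_ball (hasEigenvalue_of_isRoot B μ hμ)
    rw [Metric.mem_closedBall, dist_eq_norm] at hk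
    -- diagonal entry of B.transpose at k
    have hdiagk : B.transpose k k = Complex.ofReal (-(σ k) - r) := by
      simp [hB, hA, colScale, hdiag k, Matrix.one_apply]
    -- radius bound
    have hrad : (∑ j ∈ Finset.univ.erase k, ‖B.transpose k j‖) = σ k := by
      have : ∀ j ∈ Finset.univ.erase k, ‖B.transpose k j‖ = σ k * Φ j k := by
        intro j hj
        have hjk : j ≠ k := Finset.ne_of_mem_erase hj
        have : B.transpose k j = Complex.ofReal (σ k * Φ j k) := by
          simp [hB, hA, colScale, Matrix.one_apply_ne hjk]
        rw [this, Complex.norm_real, Real.norm_eq_abs,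
          abs_of_nonneg (mul_nonneg (hσ k).le (hoff j k hjk))]
      rw [Finset.sum_congr rfl this, ← Finset.mul_sum]
      have hsum : ∑ j ∈ Finset.univ.erase k, Φ j k = 1 := by
        have := Finset.sum_erase_add Finset.univ (fun j => Φ j k) (Finset.mem_univ k)
        simp only [hdiag k, hcol k] at this
        linarith
      rw [hsum, mul_one]
    rw [hrad, hdiagk] at hk
    -- real part estimate
    have hre : μ.re - (-(σ k) - r) ≤ ‖μ - Complex.ofReal (-(σ k) - r)‖ := by
      have := Complex.abs_re_le_norm (μ - Complex.ofReal (-(σ k) - r))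
      have h2 : (μ - Complex.ofReal (-(σ k) - r)).re = μ.re - (-(σ k) - r) := by
        simp
      calc μ.re - (-(σ k) - r) = (μ - Complex.ofReal (-(σ k) - r)).re := h2.symm
        _ ≤ |(μ - Complex.ofReal (-(σ k) - r)).re| := le_abs_self _
        _ ≤ ‖μ - Complex.ofReal (-(σ k) - r)‖ := this
    have := hσ k
    linarith
  refine ⟨main, ?_⟩
  intro hdet
  have hBdet : B.det = 0 := by
    have hBm : B = Complex.ofRealHom.mapMatrix A := rfl
    rw [hBm, ← RingHom.map_det, hdet, map_zero]
  have h0 : B.charpoly.IsRoot 0 := by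
    rw [Polynomial.IsRoot, charpoly_eval_aux, zero_smul, zero_sub, Matrix.det_neg, hBdet,
      mul_zero]
  have := main 0 h0
  simp at this
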